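/- arXiv:0906.1191 — 2 statements merged into one kernel-verified Lean document; each statement's English description precedes it below -/
import Mathlib

section
/- Let a, b be positive integers with a < b and gcd(a,b) = 1, and let A : ℤ² → ℤ² be the linear map A(x,y) = (x, (b div a)·x + y). Then A maps S_{a, b mod a} bijectively onto C_{a,b}; in particular C_{a,b} = A(S_{a, b mod a}). -/
/-- Membership of a lattice point `z` in the half-plane
`H^σ_{a,b,r} = {x ∈ ℝ² : 0 ≤ σ·((b/a)·x₁ − x₂ + r)}`. -/
def inH (a b σ : ℤ) (r : ℝ) (z : ℤ × ℤ) : Prop :=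
  0 ≤ (σ : ℝ) * ((b : ℝ) / (a : ℝ) * (z.1 : ℝ) - (z.2 : ℝ) + r)

/-- The staircase `S^σ_{a,b,r}`. -/
def stair (a b σ : ℤ) (r : ℝ) : Set (ℤ × ℤ) :=
  {z | inH a b σ r z ∧
    (¬ inH a b σ r (z.1 - σ, z.2) ∨ ¬ inH a b σ r (z.1, z.2 + σ))}

/-- The set of corners `C^σ_{a,b,r}`. -/
def corner (a b σ : ℤ) (r : ℝ) : Set (ℤ × ℤ) :=
  {z | inH a b σ r z ∧
    (¬ inH a b σ r (z.1 - σ, z.2) ∧ ¬ inH a b σ r (z.1, z.2 + σ))}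

/-- The column `col_x(A)` of a set `A ⊆ ℤ²`. -/
def col (x : ℤ) (A : Set (ℤ × ℤ)) : Set (ℤ × ℤ) := {p ∈ A | p.1 = x}

lemma inH_iff (a c : ℤ) (ha : 0 < a) (z : ℤ × ℤ) :
    inH a c 1 0 z ↔ a * z.2 ≤ c * z.1 := by
  unfold inH
  rw [Int.cast_one, one_mul, add_zero, sub_nonneg, div_mul_eq_mul_div,
    le_div_iff₀ (by exact_mod_cast ha), mul_comm (z.2 : ℝ)]
  exact_mod_cast Iff.rfl

theorem stmt9 (a b : ℤ) (ha : 0 < a) (hab : a < b) (hg : Int.gcd a b = 1) :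
    Set.BijOn (fun z : ℤ × ℤ => (z.1, b / a * z.1 + z.2))
      (stair a (b % a) 1 0) (corner a b 1 0) ∧
    corner a b 1 0 =
      (fun z : ℤ × ℤ => (z.1, b / a * z.1 + z.2)) '' stair a (b % a) 1 0 := by
  set q := b / a with hq
  set m := b % a with hm
  have hb : a * q + m = b := Int.mul_ediv_add_emod b a
  have hm0 : 0 ≤ m := Int.emod_nonneg b ha.ne'
  have hma : m < a := Int.emod_lt_of_pos b ha
  have hmaps : Set.MapsTo (fun z : ℤ × ℤ => (z.1, q * z.1 + z.2))
      (stair a m 1 0) (corner a b 1 0) := by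
    rintro ⟨x, y⟩ hz
    simp only [stair, corner, Set.mem_setOf_eq, inH_iff a _ ha] at hz ⊢
    obtain ⟨h1, h2⟩ := hz
    have e : b * x = a * q * x + m * x := by rw [← hb]; ring
    have e2 : b * (x - 1) = a * q * x + m * x - b := by rw [← hb]; ring
    refine ⟨by nlinarith, ?_, ?_⟩
    · rcases h2 with h | h <;> · intro hc; nlinarith
    · rcases h2 with h | h <;> · intro hc; nlinarith
  have hinj : Set.InjOn (fun z : ℤ × ℤ => (z.1, q * z.1 + z.2)) (stair a m 1 0) := by
    rintro ⟨x, y⟩ _ ⟨x', y'⟩ _ h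
    simp only [Prod.mk.injEq] at h ⊢
    obtain ⟨h1, h2⟩ := h
    subst h1
    exact ⟨rfl, by linarith⟩
  have hsurj : Set.SurjOn (fun z : ℤ × ℤ => (z.1, q * z.1 + z.2))
      (stair a m 1 0) (corner a b 1 0) := by
    rintro ⟨x, y⟩ hw
    simp only [corner, Set.mem_setOf_eq, inH_iff a _ ha] at hw
    obtain ⟨h1, h2, h3⟩ := hw
    have e : b * x = a * q * x + m * x := by rw [← hb]; ring
    refine ⟨(x, y - q * x), ?_, by simp⟩
    simp only [stair, Set.mem_setOf_eq, inH_iff a _ ha]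
    refine ⟨by nlinarith, Or.inr ?_⟩
    intro hc
    exact h3 (by nlinarith)
  exact ⟨⟨hmaps, hinj, hsurj⟩, (Set.BijOn.image_eq ⟨hmaps, hinj, hsurj⟩).symm⟩
end

section
/- Let a, b be integers with 1 ≤ b < a and let s : ℤ → ℤ be a periodic 0,1-sequence whose minimal period is a and with 𝟙(s) = b. Then s ≡ B_{a,b} (i.e. s is a shift of the Sturmian sequence B_{a,b}) if and only if s is swap symmetric. -/
/-- The Beatty sequence `B_{a,b}(n) = ⌊b·n/a⌋ − ⌊b·(n−1)/a⌋`. -/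
def beatty (a b n : ℤ) : ℤ := ⌊(b * n : ℚ) / a⌋ - ⌊(b * (n - 1) : ℚ) / a⌋

/-- `swapSeq s p i` decreases `s` by one at positions `≡ i (mod p)` and
increases it by one at positions `≡ i + 1 (mod p)`. -/
def swapSeq (s : ℤ → ℤ) (p i : ℤ) : ℤ → ℤ := fun n =>
  if p ∣ n - i then s n - 1 else if p ∣ n - (i + 1) then s n + 1 else s n


section helpers
variable {a : ℤ}

lemma flq_bounds (ha : 0 < a) (x : ℤ) :
    a * ⌊(x : ℚ) / (a : ℚ)⌋ ≤ x ∧ x < a * ⌊(x : ℚ) / (a : ℚ)⌋ + a := by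
  have ha' : (0:ℚ) < (a:ℚ) := by exact_mod_cast ha
  constructor
  · have h := Int.floor_le ((x : ℚ) / (a : ℚ))
    rw [le_div_iff₀ ha'] at h
    have : (↑(a * ⌊(x : ℚ) / (a : ℚ)⌋) : ℚ) ≤ (x:ℚ) := by push_cast; linarith
    exact_mod_cast this
  · have h := Int.lt_floor_add_one ((x : ℚ) / (a : ℚ))
    rw [div_lt_iff₀ ha'] at h
    have : (x:ℚ) < (↑(a * ⌊(x : ℚ) / (a : ℚ)⌋ + a) : ℚ) := by push_cast; linarith
    exact_mod_cast this

lemma flq (ha : 0 < a) (x q : ℤ) (h1 : a * q ≤ x) (h2 : x < a * q + a) :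
    ⌊(x : ℚ) / (a : ℚ)⌋ = q := by
  obtain ⟨g1, g2⟩ := flq_bounds ha x
  set w := ⌊(x : ℚ) / (a : ℚ)⌋ with hw
  have hlt1 : a * w < a * (q + 1) := by nlinarith
  have hlt2 : a * q < a * (w + 1) := by nlinarith
  have := (mul_lt_mul_iff_right₀ ha).mp hlt1
  have := (mul_lt_mul_iff_right₀ ha).mp hlt2
  omega

lemma fadd (ha : 0 < a) (x m : ℤ) :
    ⌊((x + a * m : ℤ) : ℚ) / (a : ℚ)⌋ = ⌊(x : ℚ) / (a : ℚ)⌋ + m := by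
  have ha' : (a:ℚ) ≠ 0 := by exact_mod_cast ha.ne'
  have : ((x + a * m : ℤ) : ℚ) / (a : ℚ) = (x : ℚ) / (a : ℚ) + (m : ℚ) := by
    push_cast; field_simp
  rw [this]
  exact_mod_cast Int.floor_add_intCast ((x : ℚ) / (a : ℚ)) m

lemma Icc_split_bot {c d : ℤ} (h : c ≤ d) :
    Finset.Icc c d = insert c (Finset.Icc (c+1) d) := by
  ext n; simp only [Finset.mem_Icc, Finset.mem_insert]; omega

lemma Icc_split_top {c d : ℤ} (h : c ≤ d) :
    Finset.Icc c d = insert d (Finset.Icc c (d-1)) := by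
  ext n; simp only [Finset.mem_Icc, Finset.mem_insert]; omega

lemma const_of_diff (F : ℤ → ℤ) (h : ∀ n : ℤ, F n = F (n - 1)) : ∀ n : ℤ, F n = F 0 := by
  intro n
  induction n using Int.induction_on with
  | zero => rfl
  | succ k ih =>
      have h2 := h ((k:ℤ) + 1)
      have e : (k:ℤ) + 1 - 1 = (k:ℤ) := by ring
      rw [e] at h2; omega
  | pred k ih =>
      have h2 := h (-(k:ℤ))
      have e : -(k:ℤ) - 1 = -(k:ℤ) - 1 := rfl
      omega

end helpers

noncomputable def psum (s : ℤ → ℤ) (n : ℤ) : ℤ :=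
  if 0 ≤ n then ∑ k ∈ Finset.Icc 1 n, s k else -∑ k ∈ Finset.Icc (n+1) 0, s k

lemma psum_zero (s : ℤ → ℤ) : psum s 0 = 0 := by
  simp [psum]

lemma psum_succ (s : ℤ → ℤ) (n : ℤ) : psum s n = psum s (n - 1) + s n := by
  by_cases h1 : 1 ≤ n
  · have h0 : 0 ≤ n := by omega
    have h0' : 0 ≤ n - 1 := by omega
    simp only [psum, if_pos h0, if_pos h0']
    rw [Icc_split_top h1, Finset.sum_insert (by simp)]
    ring
  · by_cases h2 : n = 0
    · subst h2
      simp only [psum]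
      norm_num
    · have h3 : ¬ 0 ≤ n := by omega
      have h4 : ¬ 0 ≤ n - 1 := by omega
      simp only [psum, if_neg h3, if_neg h4]
      have e : n - 1 + 1 = n := by ring
      rw [e, Icc_split_bot (show n ≤ 0 by omega), Finset.sum_insert (by simp)]
      ring

section win
variable {a : ℤ}

lemma per_sum_one (ha : 0 < a) (G : ℤ → ℤ) (hG : ∀ n, G (n + a) = G n) :
    ∑ n ∈ Finset.Icc 1 a, G (n + 1) = ∑ n ∈ Finset.Icc 1 a, G n := by
  have h1 : ∑ n ∈ Finset.Icc 1 a, G (n + 1) = ∑ n ∈ Finset.Icc 2 (a+1), G n := by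
    rw [show (2:ℤ) = 1 + 1 by norm_num, ← Finset.map_add_right_Icc 1 a 1, Finset.sum_map]
    rfl
  rw [h1, Icc_split_top (show (2:ℤ) ≤ a + 1 by omega), Finset.sum_insert (by simp),
    Icc_split_bot (show (1:ℤ) ≤ a by omega), Finset.sum_insert (by simp)]
  have e : a + 1 - 1 = a := by ring
  have e2 : a + 1 = 1 + a := by ring
  rw [e, e2, hG 1]
  norm_num

lemma per_sum_neg_one (ha : 0 < a) (G : ℤ → ℤ) (hG : ∀ n, G (n + a) = G n) :
    ∑ n ∈ Finset.Icc 1 a, G (n - 1) = ∑ n ∈ Finset.Icc 1 a, G n := by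
  have h1 : ∑ n ∈ Finset.Icc 1 a, G (n - 1) = ∑ n ∈ Finset.Icc 0 (a-1), G n := by
    rw [show (0:ℤ) = 1 + -1 by norm_num, show a - 1 = a + -1 by ring,
      ← Finset.map_add_right_Icc 1 a (-1), Finset.sum_map]
    rfl
  rw [h1, Icc_split_bot (show (0:ℤ) ≤ a - 1 by omega), Finset.sum_insert (by simp),
    Icc_split_top (show (1:ℤ) ≤ a by omega), Finset.sum_insert (by simp)]
  have h0 := hG 0
  rw [zero_add] at h0
  rw [h0]
  norm_num

lemma per_sum (ha : 0 < a) :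
    ∀ c : ℤ, ∀ G : ℤ → ℤ, (∀ n, G (n + a) = G n) →
      ∑ n ∈ Finset.Icc 1 a, G (n + c) = ∑ n ∈ Finset.Icc 1 a, G n := by
  intro c
  induction c using Int.induction_on with
  | zero => intro G hG; simp
  | succ k ih =>
      intro G hG
      have h1 : ∑ n ∈ Finset.Icc 1 a, G (n + ((k:ℤ) + 1))
          = ∑ n ∈ Finset.Icc 1 a, (fun m => G (m + 1)) (n + (k:ℤ)) := by
        refine Finset.sum_congr rfl fun n _ => ?_
        simp only
        congr 1; ring
      rw [h1, ih (fun m => G (m + 1)) (fun n => by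
        rw [show n + a + 1 = (n + 1) + a by ring, hG])]
      exact per_sum_one ha G hG
  | pred k ih =>
      intro G hG
      have h1 : ∑ n ∈ Finset.Icc 1 a, G (n + (-(k:ℤ) - 1))
          = ∑ n ∈ Finset.Icc 1 a, (fun m => G (m - 1)) (n + -(k:ℤ)) := by
        refine Finset.sum_congr rfl fun n _ => ?_
        simp only
        congr 1; ring
      rw [h1, ih (fun m => G (m - 1)) (fun n => by
        rw [show n + a - 1 = (n - 1) + a by ring, hG])]
      exact per_sum_neg_one ha G hG

lemma win_count (ha : 0 < a) (c : ℤ) :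
    ∑ n ∈ Finset.Icc 1 a, (if a ∣ n - c then (1:ℤ) else 0) = 1 := by
  classical
  set n₀ : ℤ := (c - 1) % a + 1 with hn₀
  have hm0 : 0 ≤ (c - 1) % a := Int.emod_nonneg _ (ne_of_gt ha)
  have hm1 : (c - 1) % a < a := Int.emod_lt_of_pos _ ha
  have hdvd₀ : a ∣ n₀ - c := by
    refine ⟨-((c - 1) / a), ?_⟩
    have := Int.mul_ediv_add_emod (c - 1) a
    have h2 : a * -((c - 1) / a) = -(a * ((c - 1) / a)) := by ring
    omega
  have hfil : (Finset.Icc 1 a).filter (fun n => a ∣ n - c) = {n₀} := by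
    ext n
    simp only [Finset.mem_filter, Finset.mem_Icc, Finset.mem_singleton]
    constructor
    · rintro ⟨⟨hn1, hn2⟩, hd⟩
      obtain ⟨k, hk⟩ := dvd_sub hd hdvd₀
      have hk' : n - n₀ = a * k := by linarith [hk]
      have hn01 : 1 ≤ n₀ := by omega
      have hn02 : n₀ ≤ a := by omega
      have hkle : k ≤ 0 := by nlinarith
      have hkge : 0 ≤ k := by nlinarith
      have : k = 0 := le_antisymm hkle hkge
      subst this
      omega
    · rintro rfl
      exact ⟨⟨by omega, by omega⟩, hdvd₀⟩
  rw [Finset.sum_boole, hfil]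
  simp

end win

lemma bwd (a b : ℤ) (hb : 1 ≤ b) (hba : b < a) (s : ℤ → ℤ)
    (hper : ∀ n : ℤ, s (n + a) = s n)
    (hsum : ∑ k ∈ Finset.Icc 1 a, s k = b)
    (i j : ℤ) (hsw : ∀ n : ℤ, swapSeq s a i (n + j) = s n) :
    ∀ n : ℤ, s (n + i) = beatty a b n := by
  have ha : 0 < a := by omega
  have ha2 : 2 ≤ a := by omega
  set F : ℤ → ℤ := psum s with hF
  have Fd : ∀ n : ℤ, F n - F (n - 1) = s n := by
    intro n; rw [hF]; have := psum_succ s n; omega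
  set g : ℤ → ℤ := fun n => a * F n - b * n with hg
  -- periodicity of F and g
  have Fper : ∀ n : ℤ, F (n + a) = F n + b := by
    have hconst := const_of_diff (fun n => F (n + a) - F n) (by
      intro n
      have h1 := Fd (n + a)
      have h2 := Fd n
      have e1 : n + a - 1 = n - 1 + a := by ring
      rw [e1] at h1
      have h3 := hper n
      omega)
    intro n
    have h0 := hconst n
    simp only [zero_add] at h0
    have hFa : F a = b := by
      have : F a = ∑ k ∈ Finset.Icc 1 a, s k := by
        simp only [hF, psum, if_pos (le_of_lt ha)]
      rw [this, hsum]
    have hF0 : F 0 = 0 := psum_zero s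
    omega
  have gper : ∀ n : ℤ, g (n + a) = g n := by
    intro n; simp only [hg]; rw [Fper]; ring
  have gmul : ∀ t : ℤ, ∀ n : ℤ, g (n + a * t) = g n := by
    intro t
    induction t using Int.induction_on with
    | zero => intro n; norm_num
    | succ k ih =>
        intro n
        have e : n + a * ((k:ℤ) + 1) = (n + a * (k:ℤ)) + a := by ring
        rw [e, gper, ih]
    | pred k ih =>
        intro n
        have h1 := gper (n + a * (-(k:ℤ) - 1))
        have e : n + a * (-(k:ℤ) - 1) + a = n + a * (-(k:ℤ)) := by ring
        rw [e] at h1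
        rw [← h1, ih]
  have gcong : ∀ m n : ℤ, a ∣ m - n → g m = g n := by
    rintro m n ⟨t, ht⟩
    have e : m = n + a * t := by omega
    rw [e, gmul]
  set e : ℤ → ℤ := fun m => if a ∣ m - i then (1:ℤ) else 0 with he
  have enonneg : ∀ m, 0 ≤ e m := by
    intro m; simp only [he]; split <;> norm_num
  have hrel0 : ∀ n : ℤ, s (n + j) - s n = e (n + j) - e (n + j - 1) := by
    intro n
    have h := hsw n
    simp only [swapSeq] at h
    by_cases h1 : a ∣ n + j - i
    · have h2 : ¬ a ∣ n + j - (i + 1) := by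
        intro h2
        have h3 : a ∣ (1:ℤ) := by
          have := dvd_sub h1 h2
          have e1 : n + j - i - (n + j - (i + 1)) = 1 := by ring
          rwa [e1] at this
        have := Int.le_of_dvd one_pos h3
        omega
      have h2' : ¬ a ∣ n + j - 1 - i := by
        intro h2'
        exact h2 (by rwa [show n + j - (i + 1) = n + j - 1 - i by ring])
      rw [if_pos h1] at h
      simp only [he, if_pos h1, if_neg h2']
      omega
    · by_cases h2 : a ∣ n + j - (i + 1)
      · have h2' : a ∣ n + j - 1 - i := by
          rwa [show n + j - 1 - i = n + j - (i + 1) by ring]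
        rw [if_neg h1, if_pos h2] at h
        simp only [he, if_neg h1, if_pos h2']
        omega
      · have h2' : ¬ a ∣ n + j - 1 - i := by
          intro h2'
          exact h2 (by rwa [show n + j - (i + 1) = n + j - 1 - i by ring])
        rw [if_neg h1, if_neg h2] at h
        simp only [he, if_neg h1, if_neg h2']
        omega
  have gd : ∀ m : ℤ, g m - g (m - 1) = a * s m - b := by
    intro m
    simp only [hg]
    have h := Fd m
    linear_combination a * h
  set C : ℤ := g (0 + j) - g 0 - a * e (0 + j) with hC0
  have hD : ∀ n : ℤ, g (n + j) - g n - a * e (n + j) = C := by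
    have := const_of_diff (fun n => g (n + j) - g n - a * e (n + j)) (by
      intro n
      have e1 : n - 1 + j = n + j - 1 := by ring
      rw [e1]
      have h1 := gd (n + j)
      have h2 := gd n
      have h3 := hrel0 n
      linear_combination h1 - h2 + a * h3)
    intro n
    have hh := this n
    rw [hC0]
    exact hh
  -- C = -1
  have hCm1 : C = -1 := by
    have h1 : ∑ n ∈ Finset.Icc 1 a, (g (n + j) - g n) = 0 := by
      rw [Finset.sum_sub_distrib, per_sum ha j g gper, sub_self]
    have h2 : ∑ n ∈ Finset.Icc 1 a, e (n + j) = 1 := by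
      have : ∀ n : ℤ, e (n + j) = if a ∣ n - (i - j) then (1:ℤ) else 0 := by
        intro n
        simp only [he]
        congr 1
        · simp only [eq_iff_iff]
          constructor <;> intro hd
          · rwa [show n - (i - j) = n + j - i by ring]
          · rwa [show n + j - i = n - (i - j) by ring]
      rw [Finset.sum_congr rfl (fun n _ => this n)]
      exact win_count ha (i - j)
    have h3 : ∑ n ∈ Finset.Icc 1 a, (g (n + j) - g n) =
        ∑ n ∈ Finset.Icc 1 a, (a * e (n + j) + C) := by
      refine Finset.sum_congr rfl fun n _ => ?_
      have := hD n
      omega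
    rw [h1, Finset.sum_add_distrib, ← Finset.mul_sum, h2, Finset.sum_const,
      Int.card_Icc] at h3
    have hcard : ((a + 1 - 1).toNat : ℤ) = a := by
      rw [show a + 1 - 1 = a by ring, Int.toNat_of_nonneg (le_of_lt ha)]
    have h4 : (0:ℤ) = a * 1 + a * C := by
      rw [h3]
      simp only [nsmul_eq_mul]
      rw [hcard]
      try ring
    have h5 : a * (1 + C) = 0 := by linarith [h4]
    rcases mul_eq_zero.mp h5 with h | h
    · omega
    · omega
  -- telescoping
  have tel : ∀ k : ℕ, ∀ n : ℤ,
      g (n + j * k) = g n + a * (∑ l ∈ Finset.range k, e (n + j * ((l:ℤ) + 1))) - k := by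
    intro k
    induction k with
    | zero => intro n; norm_num
    | succ k ih =>
        intro n
        have h1 := hD (n + j * (k:ℤ))
        rw [Finset.sum_range_succ]
        have e1 : n + j * ((k:ℕ) + 1 : ℕ) = (n + j * (k:ℤ)) + j := by push_cast; ring
        rw [e1]
        have e2 : n + j * ((k:ℤ) + 1) = (n + j * (k:ℤ)) + j := by ring
        rw [e2]
        have := ih n
        push_cast
        linear_combination this + h1 + hCm1
  have horb : ∑ l ∈ Finset.range a.toNat, e (i + j * ((l:ℤ) + 1)) = 1 := by
    have h1 := tel a.toNat i
    have hta : ((a.toNat : ℤ)) = a := Int.toNat_of_nonneg (le_of_lt ha)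
    have h2 : g (i + j * (a.toNat : ℤ)) = g i := by
      apply gcong
      refine ⟨j, ?_⟩
      rw [hta]; ring
    rw [h2, hta] at h1
    have h3 : a * (∑ l ∈ Finset.range a.toNat, e (i + j * ((l:ℤ) + 1))) = a * 1 := by
      linarith [h1]
    exact mul_left_cancel₀ (by omega) h3
  -- nondivisibility along the orbit
  have nd : ∀ k : ℕ, 1 ≤ k → (k:ℤ) < a → ¬ a ∣ j * (k:ℤ) := by
    intro k hk1 hk2 hdvd
    have hta : ((a.toNat : ℤ)) = a := Int.toNat_of_nonneg (le_of_lt ha)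
    have hl1 : e (i + j * (((k - 1 : ℕ):ℤ) + 1)) = 1 := by
      have e1 : ((k - 1 : ℕ):ℤ) + 1 = (k:ℤ) := by push_cast [hk1]; ring
      rw [e1]
      simp only [he]
      rw [if_pos (by rwa [show i + j * (k:ℤ) - i = j * (k:ℤ) by ring])]
    have hl2 : e (i + j * (((a.toNat - 1 : ℕ):ℤ) + 1)) = 1 := by
      have e1 : ((a.toNat - 1 : ℕ):ℤ) + 1 = a := by
        have : (1:ℕ) ≤ a.toNat := by omega
        push_cast [this]
        omega
      rw [e1]
      simp only [he]
      rw [if_pos ⟨j, by ring⟩]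
    have hne : (k - 1 : ℕ) ≠ (a.toNat - 1 : ℕ) := by omega
    have hsub : ({(k-1 : ℕ), (a.toNat - 1 : ℕ)} : Finset ℕ) ⊆ Finset.range a.toNat := by
      intro x hx
      simp only [Finset.mem_insert, Finset.mem_singleton] at hx
      rcases hx with rfl | rfl <;> simp only [Finset.mem_range] <;> omega
    have h2 : (2:ℤ) ≤ ∑ l ∈ Finset.range a.toNat, e (i + j * ((l:ℤ) + 1)) := by
      have hpair : ∑ l ∈ ({(k-1 : ℕ), (a.toNat - 1 : ℕ)} : Finset ℕ),
          e (i + j * ((l:ℤ) + 1)) = 2 := by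
        rw [Finset.sum_pair hne, hl1, hl2]; norm_num
      calc (2:ℤ) = ∑ l ∈ ({(k-1 : ℕ), (a.toNat - 1 : ℕ)} : Finset ℕ),
            e (i + j * ((l:ℤ) + 1)) := hpair.symm
        _ ≤ _ := Finset.sum_le_sum_of_subset_of_nonneg hsub
            (fun l _ _ => enonneg _)
    omega
  -- values along the orbit
  have vals : ∀ k : ℕ, (k:ℤ) ≤ a - 1 → g (i + j * (k:ℤ)) = g i - k := by
    intro k
    induction k with
    | zero => intro _; norm_num
    | succ k ih =>
        intro hk
        have hk' : (k:ℤ) ≤ a - 1 := by push_cast at hk ⊢; omega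
        have h1 := hD (i + j * (k:ℤ))
        have e1 : i + j * (k:ℤ) + j = i + j * ((k:ℤ) + 1) := by ring
        rw [e1] at h1
        have h2 : e (i + j * ((k:ℤ) + 1)) = 0 := by
          simp only [he]
          rw [if_neg]
          intro hd
          refine nd (k + 1) (by omega) (by push_cast; push_cast at hk; omega) ?_
          rw [show i + j * ((k:ℤ) + 1) - i = j * ((k:ℤ)+1) by ring] at hd
          rwa [show ((k+1:ℕ):ℤ) = (k:ℤ)+1 by push_cast; ring]
        rw [h2] at h1
        have h3 := ih hk'
        push_cast
        linear_combination h1 + h3 + hCm1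
  have adiv : ∀ n : ℤ, a ∣ g n + b * n := by
    intro n
    exact ⟨F n, by simp only [hg]; ring⟩
  have hbj : a ∣ b * j - 1 := by
    have h1 : g (i + j) = g i - 1 := by
      have := vals 1 (by omega)
      push_cast at this
      rwa [mul_one] at this
    have h2 := adiv (i + j)
    have h3 := adiv i
    have h4 := dvd_sub h2 h3
    have e1 : g (i + j) + b * (i + j) - (g i + b * i) = b * j - 1 := by
      linear_combination h1
    rwa [e1] at h4
  obtain ⟨mm, hmm⟩ := hbj
  -- the range of g
  have range_g : ∀ n : ℤ, g i - (a - 1) ≤ g n ∧ g n ≤ g i := by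
    intro n
    set k : ℤ := (b * (n - i)) % a with hk
    set q : ℤ := (b * (n - i)) / a with hq
    have hk0 : 0 ≤ k := Int.emod_nonneg _ (by omega)
    have hk1 : k < a := Int.emod_lt_of_pos _ ha
    have hkdef : a * q + k = b * (n - i) := Int.mul_ediv_add_emod _ _
    have hdvd : a ∣ n - (i + j * k) := by
      refine ⟨j * q - mm * (n - i), ?_⟩
      have h1 : k = b * (n - i) - a * q := by omega
      linear_combination (-j) * h1 + (-(n - i)) * hmm
    have hgn : g n = g (i + j * k) := gcong _ _ hdvd
    have htk : ((k.toNat : ℤ)) = k := Int.toNat_of_nonneg hk0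
    have hv := vals k.toNat (by omega)
    rw [htk] at hv
    rw [hgn, hv]
    omega
  -- conclusion
  have hfloor : ∀ m : ℤ, ⌊((b * m + g i : ℤ) : ℚ) / (a : ℚ)⌋ = F m := by
    intro m
    refine flq ha _ _ ?_ ?_
    · have h1 := (range_g m).2
      have h2 : a * F m = g m + b * m := by simp only [hg]; ring
      omega
    · have h1 := (range_g m).1
      have h2 : a * F m = g m + b * m := by simp only [hg]; ring
      omega
  intro n
  have h1 : s (n + i) = F (n + i) - F (n + i - 1) := (Fd (n + i)).symm
  have hFi : a * F i = g i + b * i := by simp only [hg]; ring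
  have h2 : F (n + i) = ⌊((b * n : ℤ) : ℚ) / (a : ℚ)⌋ + F i := by
    have := hfloor (n + i)
    rw [show b * (n + i) + g i = b * n + a * F i by linarith [hFi]] at this
    rw [← this, fadd ha]
  have h3 : F (n + i - 1) = ⌊((b * (n - 1) : ℤ) : ℚ) / (a : ℚ)⌋ + F i := by
    have := hfloor (n + i - 1)
    rw [show b * (n + i - 1) + g i = b * (n - 1) + a * F i by linarith [hFi]] at this
    rw [← this, fadd ha]
  rw [h1, h2, h3]
  simp only [beatty]
  have c1 : ((b * n : ℤ) : ℚ) = (b : ℚ) * (n : ℚ) := by push_cast; ring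
  have c2 : ((b * (n - 1) : ℤ) : ℚ) = (b : ℚ) * ((n : ℚ) - 1) := by push_cast; ring
  rw [c1, c2]
  ring

lemma flq' {a : ℤ} (ha : 0 < a) (x Q r : ℤ) (hx : x = a * Q + r) (h0 : 0 ≤ r) (h1 : r < a) :
    ⌊(x : ℚ) / (a : ℚ)⌋ = Q := by
  refine flq ha x Q (by omega) (by omega)

lemma beatty_cast (a b m : ℤ) :
    beatty a b m = ⌊((b * m : ℤ) : ℚ) / (a : ℚ)⌋ - ⌊((b * (m - 1) : ℤ) : ℚ) / (a : ℚ)⌋ := by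
  simp only [beatty]
  rw [show ((b : ℚ) * (m : ℚ)) = ((b * m : ℤ) : ℚ) by push_cast; ring,
    show ((b : ℚ) * ((m : ℚ) - 1)) = ((b * (m - 1) : ℤ) : ℚ) by push_cast; ring]

lemma beatty_per {a b : ℤ} (ha : 0 < a) (p q : ℤ) (hpq : b * p = a * q) (k : ℤ) :
    beatty a b (k + p) = beatty a b k := by
  rw [beatty_cast, beatty_cast]
  have e1 : b * (k + p) = b * k + a * q := by linear_combination hpq
  have e2 : b * (k + p - 1) = b * (k - 1) + a * q := by linear_combination hpq
  rw [e1, e2, fadd ha, fadd ha]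
  ring

lemma fwd (a b : ℤ) (hb : 1 ≤ b) (hba : b < a) (s : ℤ → ℤ)
    (hmin : ∀ p : ℤ, 0 < p → p < a → ¬ (∀ n : ℤ, s (n + p) = s n))
    (i₀ : ℤ) (h : ∀ n : ℤ, s (n + i₀) = beatty a b n) :
    ∃ i j : ℤ, ∀ n : ℤ, swapSeq s a i (n + j) = s n := by
  have ha : 0 < a := by omega
  have hs : ∀ m : ℤ, s m = beatty a b (m - i₀) := by
    intro m
    have := h (m - i₀)
    rwa [show m - i₀ + i₀ = m by ring] at this
  have hco : IsCoprime a b := by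
    rw [Int.isCoprime_iff_gcd_eq_one]
    by_contra hd
    have hd0 : Int.gcd a b ≠ 0 := by
      intro hz
      obtain ⟨h1', h2'⟩ := Int.gcd_eq_zero_iff.mp hz
      omega
    have hd2 : 2 ≤ (Int.gcd a b : ℤ) := by omega
    obtain ⟨a', ha'⟩ : ((Int.gcd a b : ℤ)) ∣ a := Int.gcd_dvd_left a b
    obtain ⟨b', hb'⟩ : ((Int.gcd a b : ℤ)) ∣ b := Int.gcd_dvd_right a b
    have ha'pos : 0 < a' := by nlinarith
    have ha'lt : a' < a := by nlinarith
    refine hmin a' ha'pos ha'lt ?_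
    intro n
    rw [hs (n + a'), hs n, show n + a' - i₀ = (n - i₀) + a' by ring]
    refine beatty_per ha a' b' ?_ (n - i₀)
    linear_combination a' * hb' - b' * ha'
  obtain ⟨u, v, huv⟩ := id hco
  have hbv : b * v = 1 + a * (-u) := by linear_combination huv
  set t : ℤ := -u with ht
  refine ⟨i₀, v, ?_⟩
  intro n
  simp only [swapSeq]
  by_cases h1 : a ∣ n + v - i₀
  · obtain ⟨u₁, hu₁⟩ := h1
    rw [if_pos ⟨u₁, hu₁⟩, hs (n + v), hs n, beatty_cast, beatty_cast]
    rw [flq' ha (b * (n + v - i₀)) (b * u₁) 0 (by linear_combination b * hu₁) le_rfl ha,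
      flq' ha (b * (n + v - i₀ - 1)) (b * u₁ - 1) (a - b) (by linear_combination b * hu₁)
        (by omega) (by omega),
      flq' ha (b * (n - i₀)) (b * u₁ - t - 1) (a - 1) (by linear_combination b * hu₁ - hbv)
        (by omega) (by omega),
      flq' ha (b * (n - i₀ - 1)) (b * u₁ - t - 1) (a - 1 - b) (by linear_combination b * hu₁ - hbv)
        (by omega) (by omega)]
    ring
  · by_cases h2 : a ∣ n + v - (i₀ + 1)
    · obtain ⟨u₁, hu₁⟩ := h2
      rw [if_neg h1, if_pos ⟨u₁, hu₁⟩, hs (n + v), hs n, beatty_cast, beatty_cast]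
      rw [flq' ha (b * (n + v - i₀)) (b * u₁) b (by linear_combination b * hu₁) (by omega) hba,
        flq' ha (b * (n + v - i₀ - 1)) (b * u₁) 0 (by linear_combination b * hu₁) le_rfl ha,
        flq' ha (b * (n - i₀)) (b * u₁ - t) (b - 1) (by linear_combination b * hu₁ - hbv)
          (by omega) (by omega),
        flq' ha (b * (n - i₀ - 1)) (b * u₁ - t - 1) (a - 1) (by linear_combination b * hu₁ - hbv)
          (by omega) (by omega)]
      ring
    · rw [if_neg h1, if_neg h2, hs (n + v), hs n, beatty_cast, beatty_cast]
      set r₀ : ℤ := (n + v - i₀) % a with hr₀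
      set u₁ : ℤ := (n + v - i₀) / a with hu₁'
      have hru : a * u₁ + r₀ = n + v - i₀ := Int.mul_ediv_add_emod _ _
      have hr2 : 0 ≤ r₀ := Int.emod_nonneg _ (by omega)
      have hr3 : r₀ < a := Int.emod_lt_of_pos _ ha
      have hr0 : r₀ ≠ 0 := by
        intro hz
        exact h1 ⟨u₁, by omega⟩
      have hr1 : r₀ ≠ 1 := by
        intro hz
        exact h2 ⟨u₁, by omega⟩
      set w : ℤ := ⌊((b * r₀ : ℤ) : ℚ) / (a : ℚ)⌋ with hw
      set w' : ℤ := ⌊((b * (r₀ - 1) : ℤ) : ℚ) / (a : ℚ)⌋ with hw'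
      obtain ⟨hwb1, hwb2⟩ := flq_bounds ha (b * r₀)
      obtain ⟨hwb1', hwb2'⟩ := flq_bounds ha (b * (r₀ - 1))
      rw [← hw] at hwb1 hwb2
      rw [← hw'] at hwb1' hwb2'
      have hsw1 : a * w + 1 ≤ b * r₀ := by
        rcases eq_or_lt_of_le hwb1 with heq | hlt
        · exfalso
          have hdr : a ∣ r₀ := hco.dvd_of_dvd_mul_left ⟨w, heq.symm⟩
          have := Int.le_of_dvd (by omega) hdr
          omega
        · omega
      have hsw2 : a * w' + 1 ≤ b * (r₀ - 1) := by
        rcases eq_or_lt_of_le hwb1' with heq | hlt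
        · exfalso
          have hdr : a ∣ r₀ - 1 := hco.dvd_of_dvd_mul_left ⟨w', heq.symm⟩
          have := Int.le_of_dvd (by omega) hdr
          omega
        · omega
      rw [flq' ha (b * (n + v - i₀)) (b * u₁ + w) (b * r₀ - a * w)
          (by linear_combination (-b) * hru) (by omega) (by omega),
        flq' ha (b * (n + v - i₀ - 1)) (b * u₁ + w') (b * (r₀ - 1) - a * w')
          (by linear_combination (-b) * hru) (by omega) (by omega),
        flq' ha (b * (n - i₀)) (b * u₁ + w - t) (b * r₀ - a * w - 1)
          (by linear_combination (-b) * hru - hbv) (by omega) (by omega),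
        flq' ha (b * (n - i₀ - 1)) (b * u₁ + w' - t) (b * (r₀ - 1) - a * w' - 1)
          (by linear_combination (-b) * hru - hbv) (by omega) (by omega)]
      ring

theorem stmt16 (a b : ℤ) (hb : 1 ≤ b) (hba : b < a) (s : ℤ → ℤ)
    (h01 : ∀ n : ℤ, s n = 0 ∨ s n = 1)
    (hper : ∀ n : ℤ, s (n + a) = s n)
    (hmin : ∀ p : ℤ, 0 < p → p < a → ¬ (∀ n : ℤ, s (n + p) = s n))
    (hones : (((Finset.Icc 0 (a - 1)).filter fun n => s n = 1).card : ℤ) = b) :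
    (∃ i : ℤ, ∀ n : ℤ, s (n + i) = beatty a b n) ↔
      (∃ i j : ℤ, ∀ n : ℤ, swapSeq s a i (n + j) = s n) := by
  have ha : 0 < a := by omega
  constructor
  · rintro ⟨i₀, h⟩
    exact fwd a b hb hba s hmin i₀ h
  · rintro ⟨i, j, hsw⟩
    have hsum : ∑ k ∈ Finset.Icc 1 a, s k = b := by
      have h1 : ∑ k ∈ Finset.Icc 1 a, s k = s a + ∑ k ∈ Finset.Icc 1 (a - 1), s k := by
        rw [Icc_split_top (show (1:ℤ) ≤ a by omega), Finset.sum_insert (by simp)]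
      have h2 : ∑ k ∈ Finset.Icc 0 (a - 1), s k = s 0 + ∑ k ∈ Finset.Icc 1 (a - 1), s k := by
        rw [Icc_split_bot (show (0:ℤ) ≤ a - 1 by omega), Finset.sum_insert (by simp)]
        norm_num
      have h3 : s a = s 0 := by
        have := hper 0
        rwa [zero_add] at this
      have h4 : ∑ k ∈ Finset.Icc 0 (a - 1), s k =
          ∑ k ∈ Finset.Icc 0 (a - 1), (if s k = 1 then (1:ℤ) else 0) := by
        refine Finset.sum_congr rfl fun k _ => ?_
        rcases h01 k with hk | hk <;> simp [hk]
      have h5 : ∑ k ∈ Finset.Icc 0 (a - 1), (if s k = 1 then (1:ℤ) else 0)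
          = (((Finset.Icc 0 (a - 1)).filter fun n => s n = 1).card : ℤ) := by
        rw [Finset.sum_boole]
      omega
    exact ⟨i, bwd a b hb hba s hper hsum i j hsw⟩
end
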